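/- Let G=(V,E) be an undirected polymatroidal network with a fractional cut solution ℓ, ℓ(e,u), ℓ(e,v). Let g: V → [0,β] be 1-Lipschitz with respect to dist_ℓ, let 0 ≤ a_0 ≤ a < b ≤ b_0 ≤ β, and for θ let S_θ = {u ∈ V : g(u) < θ}. Suppose that for every edge e = uv belonging to ∪_{θ∈[a,b]} δ(S_θ), both g(u) and g(v) lie in [a_0,b_0]. Then ∫_a^b ν(δ(S_θ)) dθ ≤ 2·Σ_{v: g(v)∈[a_0,b_0]} ρ̂_v(d_v). -/

import Mathlib

open Finset MeasureTheory
open scoped ENNReal Classical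

/-- `UWalk ep1 ep2 s t p`: in the undirected graph whose edge `e` has endpoints
`ep1 e` and `ep2 e`, the list of edges `p` forms a walk from `s` to `t`. -/
def UWalk {V E : Type} [DecidableEq V] (ep1 ep2 : E → V) : V → V → List E → Prop
  | s, t, [] => s = t
  | s, t, e :: p => (ep1 e = s ∨ ep2 e = s) ∧
      UWalk ep1 ep2 (if ep1 e = s then ep2 e else ep1 e) t p

/-- The list of vertices visited by an undirected walk starting at `s`. -/
def uwalkVerts {V E : Type} [DecidableEq V] (ep1 ep2 : E → V) : V → List E → List V
  | s, [] => [s]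
  | s, e :: p => s :: uwalkVerts ep1 ep2 (if ep1 e = s then ep2 e else ep1 e) p

/-- A simple undirected path from `s` to `t`. -/
def UIsPath {V E : Type} [DecidableEq V] (ep1 ep2 : E → V) (s t : V) (p : List E) : Prop :=
  UWalk ep1 ep2 s t p ∧ (uwalkVerts ep1 ep2 s p).Nodup

/-- `F` separates `s` and `t`: they lie in different connected components of `G∖F`. -/
def USep {V E : Type} [DecidableEq V] (ep1 ep2 : E → V) (F : Finset E) (s t : V) : Prop :=
  ¬ ∃ p : List E, UWalk ep1 ep2 s t p ∧ ∀ e ∈ p, e ∉ F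

/-- `δ(S)`: the set of edges with exactly one endpoint in `S`. -/
def uvcut {V E : Type} [Fintype E] [DecidableEq V] (ep1 ep2 : E → V) (S : Finset V) :
    Finset E :=
  Finset.univ.filter (fun e => (ep1 e ∈ S ∧ ep2 e ∉ S) ∨ (ep1 e ∉ S ∧ ep2 e ∈ S))

/-- Shortest-path distance (in `ℝ≥0∞`, `⊤` when unreachable) under edge lengths `len`. -/
noncomputable def udist {V E : Type} [DecidableEq V] (ep1 ep2 : E → V) (len : E → ℝ)
    (u v : V) : ℝ≥0∞ :=
  ⨅ p : { p : List E // UWalk ep1 ep2 u v p }, ENNReal.ofReal ((p.1.map len).sum)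

/-- The Lovász extension of `ρ` on the ground set `ground`,
`ρ̂(x) = ∫_0^∞ ρ({e ∈ ground : x e ≥ θ}) dθ` (which agrees with `∫_0^1` when `x ≤ 1`). -/
noncomputable def lovaszExt {E : Type} [Fintype E] (ρ : Finset E → ℝ)
    (ground : Finset E) (x : E → ℝ) : ℝ :=
  ∫ θ in Set.Ioi (0:ℝ), ρ (ground.filter (fun e => θ ≤ x e))

/-- An undirected polymatroidal network: a finite undirected graph together with,
for each node `v`, a polymatroid `rho v` on the set of edges incident to `v`. -/
structure UPolyNet (V E : Type) [Fintype V] [Fintype E] [DecidableEq V] [DecidableEq E] where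
  ep1 : E → V
  ep2 : E → V
  rho : V → Finset E → ℝ
  rho_empty : ∀ v, rho v ∅ = 0
  rho_nonneg : ∀ v A, A ⊆ Finset.univ.filter (fun e => ep1 e = v ∨ ep2 e = v) → 0 ≤ rho v A
  rho_mono : ∀ v A B, A ⊆ B → B ⊆ Finset.univ.filter (fun e => ep1 e = v ∨ ep2 e = v) →
    rho v A ≤ rho v B
  rho_submod : ∀ v A B, A ⊆ Finset.univ.filter (fun e => ep1 e = v ∨ ep2 e = v) →
    B ⊆ Finset.univ.filter (fun e => ep1 e = v ∨ ep2 e = v) →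
    rho v (A ∪ B) + rho v (A ∩ B) ≤ rho v A + rho v B

namespace UPolyNet

variable {V E : Type} [Fintype V] [Fintype E] [DecidableEq V] [DecidableEq E]

/-- The set `δ(v)` of edges incident to `v` (the ground set of `rho v`). -/
def incE (N : UPolyNet V E) (v : V) : Finset E :=
  Finset.univ.filter (fun e => N.ep1 e = v ∨ N.ep2 e = v)

/-- The cost `ν(F)` of the edge cut `F`: the minimum over valid assignments `g` of
the edges of `F` to their endpoints of `Σ_v ρ_v(g⁻¹(v))`. -/
noncomputable def cutCost (N : UPolyNet V E) (F : Finset E) : ℝ :=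
  sInf { c : ℝ | ∃ g : E → V, (∀ e ∈ F, g e = N.ep1 e ∨ g e = N.ep2 e) ∧
    c = ∑ v : V, N.rho v ((N.incE v ∩ F).filter (fun e => g e = v)) }

/-- Total flow on an edge `e`. -/
noncomputable def edgeFlow (N : UPolyNet V E) {ι : Type} [Fintype ι]
    (f : ι → List E → ℝ) (e : E) : ℝ :=
  ∑ i : ι, ∑ᶠ p ∈ {p : List E | e ∈ p}, f i p

/-- The rate of commodity `i`. -/
noncomputable def rate {ι : Type} (f : ι → List E → ℝ) (i : ι) : ℝ :=
  ∑ᶠ p : List E, f i p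

/-- A feasible multicommodity flow for the source-sink pairs `(s i, t i)`. -/
structure IsFlow (N : UPolyNet V E) {ι : Type} [Fintype ι] (s t : ι → V)
    (f : ι → List E → ℝ) : Prop where
  nonneg : ∀ i p, 0 ≤ f i p
  supp : ∀ i p, f i p ≠ 0 → UIsPath N.ep1 N.ep2 (s i) (t i) p
  fin : ∀ i, (Function.support (f i)).Finite
  cap : ∀ v, ∀ S ⊆ N.incE v, ∑ e ∈ S, N.edgeFlow f e ≤ N.rho v S

/-- `D(F)`: the total demand of the pairs separated by `F`. -/
noncomputable def sepDemand (N : UPolyNet V E) {ι : Type} [Fintype ι]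
    (s t : ι → V) (D : ι → ℝ) (F : Finset E) : ℝ :=
  ∑ i : ι, if USep N.ep1 N.ep2 F (s i) (t i) then D i else 0

/-- The value of the maximum throughput multicommodity flow. -/
noncomputable def maxThroughput (N : UPolyNet V E) {ι : Type} [Fintype ι]
    (s t : ι → V) : ℝ :=
  sSup { r : ℝ | ∃ f : ι → List E → ℝ, N.IsFlow s t f ∧ r = ∑ i : ι, rate f i }

/-- The value of the maximum concurrent multicommodity flow for demands `D`. -/
noncomputable def maxConcurrent (N : UPolyNet V E) {ι : Type} [Fintype ι]
    (s t : ι → V) (D : ι → ℝ) : ℝ :=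
  sSup { lam : ℝ | ∃ f : ι → List E → ℝ, N.IsFlow s t f ∧ ∀ i, rate f i = lam * D i }

/-- The vector `d_v`: for an edge `e` incident to `v`, its portion `ℓ(e,v)`
assigned to `v` by the fractional cut solution with portions `c1` (at `ep1`)
and `c2` (at `ep2`). -/
def dvec (N : UPolyNet V E) (c1 c2 : E → ℝ) (v : V) : E → ℝ :=
  fun e => if N.ep1 e = v then c1 e else c2 e

/-- `ρ̂_v(d_v)`, the contribution of the node `v` to the fractional cut cost. -/
noncomputable def nodeVol (N : UPolyNet V E) (c1 c2 : E → ℝ) (v : V) : ℝ :=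
  lovaszExt (N.rho v) (N.incE v) (N.dvec c1 c2 v)

/-- `vol(X) = Σ_{v ∈ X} ρ̂_v(d_v)`. -/
noncomputable def vol (N : UPolyNet V E) (c1 c2 : E → ℝ) (X : Finset V) : ℝ :=
  ∑ v ∈ X, N.nodeVol c1 c2 v

end UPolyNet

open UPolyNet

private lemma II_of_bounded (f : ℝ → ℝ) (C : ℝ) (hm : Measurable f)
    (hb : ∀ t, |f t| ≤ C) (aa bb : ℝ) : IntervalIntegrable f volume aa bb := by
  constructor <;>
  · exact MeasureTheory.Integrable.mono' (g := fun _ => C)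
      ((MeasureTheory.integrableOn_const_iff).2 (Or.inr measure_Ioc_lt_top))
      hm.aestronglyMeasurable
      (Filter.Eventually.of_forall fun t => by rw [Real.norm_eq_abs]; exact hb t)

private lemma abs_window_le (h : ℝ → ℝ) (c aa bb C : ℝ) (hab : aa ≤ bb)
    (hmeas : Measurable h) (hnn : ∀ t, 0 ≤ h t) (hC : ∀ t, h t ≤ C)
    (hint : MeasureTheory.IntegrableOn h (Set.Ioi 0)) :
    (∫ θ in aa..bb, h |θ - c|) ≤ 2 * ∫ t in Set.Ioi 0, h t := by
  have habs : ∀ t, |h t| ≤ C := fun t => by rw [abs_of_nonneg (hnn t)]; exact hC t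
  have hmc : Measurable fun θ : ℝ => h |θ - c| :=
    hmeas.comp ((measurable_id.sub measurable_const).abs)
  have hma : Measurable fun θ : ℝ => h |θ| := hmeas.comp measurable_id.abs
  set T := max |aa - c| |bb - c| with hT
  have hT0 : 0 ≤ T := le_trans (abs_nonneg _) (le_max_left _ _)
  have h1 : (∫ θ in aa..bb, h |θ - c|) ≤ ∫ θ in (c - T)..(c + T), h |θ - c| := by
    apply intervalIntegral.integral_mono_interval ?_ hab ?_
      (MeasureTheory.ae_of_all _ fun θ => hnn _)
      (II_of_bounded _ C hmc (fun t => habs _) _ _)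
    · have hm1 := le_max_left |aa - c| |bb - c|
      have hm2 := neg_abs_le (aa - c)
      linarith
    · have hm1 := le_max_right |aa - c| |bb - c|
      have hm2 := le_abs_self (bb - c)
      linarith
  have h2 : (∫ θ in (c - T)..(c + T), h |θ - c|) = ∫ t in (-T)..T, h |t| := by
    have e := intervalIntegral.integral_comp_sub_right (a := c - T) (b := c + T)
      (fun t => h |t|) c
    rw [show c - T - c = -T by ring, show c + T - c = T by ring] at e
    exact e
  have i1 : IntervalIntegrable (fun t : ℝ => h |t|) volume (-T) 0 :=
    II_of_bounded _ C hma (fun t => habs _) _ _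
  have i2 : IntervalIntegrable (fun t : ℝ => h |t|) volume 0 T :=
    II_of_bounded _ C hma (fun t => habs _) _ _
  have h3 : (∫ t in (-T)..(0:ℝ), h |t|) = ∫ t in (0:ℝ)..T, h t := by
    have e1 : (∫ t in (-T)..(0:ℝ), h |t|) = ∫ t in (-T)..(0:ℝ), h |(-t)| :=
      intervalIntegral.integral_congr fun t _ => by rw [abs_neg]
    have e2 := intervalIntegral.integral_comp_neg (a := -T) (b := (0:ℝ))
      (f := fun s => h |s|)
    simp only [neg_zero, neg_neg] at e2
    rw [e1, e2]
    exact intervalIntegral.integral_congr fun t ht => by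
      rw [Set.uIcc_of_le hT0] at ht
      rw [abs_of_nonneg ht.1]
  have h4 : (∫ t in (0:ℝ)..T, h |t|) = ∫ t in (0:ℝ)..T, h t :=
    intervalIntegral.integral_congr fun t ht => by
      rw [Set.uIcc_of_le hT0] at ht
      rw [abs_of_nonneg ht.1]
  have h5 : (∫ t in (-T)..T, h |t|) =
      (∫ t in (-T)..(0:ℝ), h |t|) + ∫ t in (0:ℝ)..T, h |t| :=
    (intervalIntegral.integral_add_adjacent_intervals i1 i2).symm
  have h6 : (∫ t in (0:ℝ)..T, h t) ≤ ∫ t in Set.Ioi 0, h t := by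
    rw [intervalIntegral.integral_of_le hT0]
    exact MeasureTheory.setIntegral_mono_set hint
      (MeasureTheory.ae_of_all _ fun x => hnn x)
      (HasSubset.Subset.eventuallyLE Set.Ioc_subset_Ioi_self)
  calc (∫ θ in aa..bb, h |θ - c|) ≤ ∫ θ in (c - T)..(c + T), h |θ - c| := h1
    _ = ∫ t in (-T)..T, h |t| := h2
    _ = (∫ t in (-T)..(0:ℝ), h |t|) + ∫ t in (0:ℝ)..T, h |t| := h5
    _ = (∫ t in (0:ℝ)..T, h t) + ∫ t in (0:ℝ)..T, h t := by rw [h3, h4]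
    _ = 2 * ∫ t in (0:ℝ)..T, h t := by ring
    _ ≤ 2 * ∫ t in Set.Ioi 0, h t := by linarith

/-- Auxiliary: the node-`v` "profile" function `t ↦ ρ_v({e ∈ δ(v) : t ≤ d_v e})`. -/
private noncomputable def hfun {V E : Type} [Fintype V] [Fintype E]
    [DecidableEq V] [DecidableEq E] (N : UPolyNet V E) (c1 c2 : E → ℝ)
    (v : V) (t : ℝ) : ℝ :=
  N.rho v ((N.incE v).filter (fun e => t ≤ N.dvec c1 c2 v e))

/-- Let `N` be an undirected polymatroidal network with a fractional
cut solution, `g : V → [0,β]` 1-Lipschitz w.r.t. `dist_ℓ`, `0 ≤ a₀ ≤ a < b ≤ b₀ ≤ β`,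
and `S_θ = {u : g u < θ}`. If every edge of `∪_{θ∈[a,b]} δ(S_θ)` has both endpoints
mapped by `g` into `[a₀,b₀]`, then
`∫_a^b ν(δ(S_θ)) dθ ≤ 2 · Σ_{v : g v ∈ [a₀,b₀]} ρ̂_v(d_v)`. -/
theorem line_embedding_cut_cost_bound_refined {V E : Type} [Fintype V] [Fintype E]
    [DecidableEq V] [DecidableEq E] (N : UPolyNet V E)
    (ℓ c1 c2 : E → ℝ) (hc1 : ∀ e, 0 ≤ c1 e) (hc2 : ∀ e, 0 ≤ c2 e)
    (hsum : ∀ e, c1 e + c2 e = ℓ e)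
    (β a₀ a b b₀ : ℝ) (h0 : 0 ≤ a₀) (h1 : a₀ ≤ a) (h2 : a < b) (h3 : b ≤ b₀) (h4 : b₀ ≤ β)
    (g : V → ℝ) (hg : ∀ u, g u ∈ Set.Icc (0:ℝ) β)
    (hLip : ∀ u v : V, ENNReal.ofReal |g u - g v| ≤ udist N.ep1 N.ep2 ℓ u v)
    (hedge : ∀ θ ∈ Set.Icc a b,
      ∀ e ∈ uvcut N.ep1 N.ep2 (Finset.univ.filter (fun u => g u < θ)),
        g (N.ep1 e) ∈ Set.Icc a₀ b₀ ∧ g (N.ep2 e) ∈ Set.Icc a₀ b₀) :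
    (∫ θ in a..b,
        N.cutCost (uvcut N.ep1 N.ep2 (Finset.univ.filter (fun u => g u < θ)))) ≤
      2 * ∑ v ∈ Finset.univ.filter (fun v => g v ∈ Set.Icc a₀ b₀),
            N.nodeVol c1 c2 v := by
  classical
  -- basic facts about hfun
  have hsubE : ∀ (v : V) (t : ℝ),
      (N.incE v).filter (fun e => t ≤ N.dvec c1 c2 v e) ⊆ N.incE v :=
    fun v t => Finset.filter_subset _ _
  have hnn : ∀ (v : V) (t : ℝ), 0 ≤ hfun N c1 c2 v t :=
    fun v t => N.rho_nonneg v _ (hsubE v t)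
  have hub : ∀ (v : V) (t : ℝ), hfun N c1 c2 v t ≤ N.rho v (N.incE v) :=
    fun v t => N.rho_mono v _ _ (hsubE v t) (Finset.Subset.refl _)
  have hanti : ∀ v : V, Antitone (hfun N c1 c2 v) := by
    intro v t1 t2 h12
    refine N.rho_mono v _ _ ?_ (hsubE v t1)
    intro e he
    rw [Finset.mem_filter] at he ⊢
    exact ⟨he.1, h12.trans he.2⟩
  have hmeas : ∀ v : V, Measurable (hfun N c1 c2 v) := fun v => (hanti v).measurable
  have hnodeVol : ∀ v : V, N.nodeVol c1 c2 v = ∫ t in Set.Ioi 0, hfun N c1 c2 v t :=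
    fun v => rfl
  -- vanishing beyond M
  set M := ∑ e : E, (c1 e + c2 e) with hM
  have hM0 : 0 ≤ M := Finset.sum_nonneg fun e _ => add_nonneg (hc1 e) (hc2 e)
  have hdM : ∀ (v : V) (e : E), N.dvec c1 c2 v e ≤ M := by
    intro v e
    have hle : c1 e + c2 e ≤ M :=
      Finset.single_le_sum (f := fun e => c1 e + c2 e)
        (fun e _ => add_nonneg (hc1 e) (hc2 e)) (Finset.mem_univ e)
    by_cases hce : N.ep1 e = v <;>
      simp only [UPolyNet.dvec, hce, if_true, if_false] <;>
      [linarith [hc2 e]; linarith [hc1 e]]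
  have hvan : ∀ (v : V) (t : ℝ), M < t → hfun N c1 c2 v t = 0 := by
    intro v t ht
    have hempty : (N.incE v).filter (fun e => t ≤ N.dvec c1 c2 v e) = ∅ := by
      rw [Finset.filter_eq_empty_iff]
      intro e _
      push_neg
      exact lt_of_le_of_lt (hdM v e) ht
    show N.rho v _ = 0
    rw [hempty, N.rho_empty]
  -- integrability on Ioi 0
  have hIOn : ∀ v : V, MeasureTheory.IntegrableOn (hfun N c1 c2 v) (Set.Ioi 0) := by
    intro v
    have hcover : Set.Ioc (0:ℝ) M ∪ Set.Ioi M = Set.Ioi 0 := Set.Ioc_union_Ioi_eq_Ioi hM0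
    rw [← hcover]
    apply MeasureTheory.IntegrableOn.union
    · exact MeasureTheory.Integrable.mono' (g := fun _ => N.rho v (N.incE v))
        ((MeasureTheory.integrableOn_const_iff).2 (Or.inr measure_Ioc_lt_top))
        (hmeas v).aestronglyMeasurable
        (Filter.Eventually.of_forall fun t => by
          rw [Real.norm_eq_abs, abs_of_nonneg (hnn v t)]; exact hub v t)
    · exact (MeasureTheory.integrableOn_congr_fun
        (fun t ht => hvan v t ht) measurableSet_Ioi).2 (MeasureTheory.integrableOn_zero)
  -- interval integrability of θ ↦ hfun v |θ - g v|
  have hII : ∀ v : V,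
      IntervalIntegrable (fun θ => hfun N c1 c2 v |θ - g v|) volume a b := by
    intro v
    have hm2 : Measurable (fun θ : ℝ => hfun N c1 c2 v |θ - g v|) :=
      (hmeas v).comp ((measurable_id.sub measurable_const).abs)
    exact II_of_bounded _ (N.rho v (N.incE v)) hm2
      (fun t => by rw [abs_of_nonneg (hnn v _)]; exact hub v _) a b
  -- per-node integral bound
  have hIb : ∀ v : V,
      (∫ θ in a..b, hfun N c1 c2 v |θ - g v|) ≤ 2 * N.nodeVol c1 c2 v := by
    intro v
    rw [hnodeVol v]
    exact abs_window_le (hfun N c1 c2 v) (g v) a b (N.rho v (N.incE v)) h2.le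
      (hmeas v) (hnn v) (hub v) (hIOn v)
  -- single-edge Lipschitz bound
  have hedgeLip : ∀ e : E, |g (N.ep1 e) - g (N.ep2 e)| ≤ c1 e + c2 e := by
    intro e
    have hw : UWalk N.ep1 N.ep2 (N.ep1 e) (N.ep2 e) [e] := by
      refine ⟨Or.inl rfl, ?_⟩
      simp [UWalk]
    have hle : udist N.ep1 N.ep2 ℓ (N.ep1 e) (N.ep2 e) ≤ ENNReal.ofReal (c1 e + c2 e) := by
      have hi := iInf_le (fun p : {p : List E // UWalk N.ep1 N.ep2 (N.ep1 e) (N.ep2 e) p} =>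
        ENNReal.ofReal ((p.1.map ℓ).sum)) ⟨[e], hw⟩
      simpa [udist, hsum e] using hi
    have h3' := (hLip (N.ep1 e) (N.ep2 e)).trans hle
    rwa [ENNReal.ofReal_le_ofReal_iff (add_nonneg (hc1 e) (hc2 e))] at h3'
  -- pointwise bound on the cut cost
  have hpt : ∀ θ ∈ Set.Icc a b,
      N.cutCost (uvcut N.ep1 N.ep2 (Finset.univ.filter (fun u => g u < θ))) ≤
        ∑ v ∈ Finset.univ.filter (fun v => g v ∈ Set.Icc a₀ b₀),
          hfun N c1 c2 v |θ - g v| := by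
    intro θ hθ
    set Fθ := uvcut N.ep1 N.ep2 (Finset.univ.filter (fun u => g u < θ)) with hFθ
    set gass : E → V := fun e => if |θ - g (N.ep1 e)| ≤ c1 e then N.ep1 e else N.ep2 e
      with hgass
    have hstep1 : N.cutCost Fθ ≤
        ∑ v : V, N.rho v ((N.incE v ∩ Fθ).filter (fun e => gass e = v)) := by
      apply csInf_le
      · refine ⟨0, ?_⟩
        rintro c ⟨g0, -, rfl⟩
        exact Finset.sum_nonneg fun v _ => N.rho_nonneg v _
          ((Finset.filter_subset _ _).trans Finset.inter_subset_left)
      · refine ⟨gass, fun e _ => ?_, rfl⟩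
        simp only [hgass]
        split_ifs <;> simp
    have hmem : ∀ (v : V) (e : E), e ∈ (N.incE v ∩ Fθ).filter (fun e => gass e = v) →
        g v ∈ Set.Icc a₀ b₀ ∧ |θ - g v| ≤ N.dvec c1 c2 v e ∧ e ∈ N.incE v := by
      intro v e he
      rw [Finset.mem_filter, Finset.mem_inter] at he
      obtain ⟨⟨hinc, hF⟩, hgv⟩ := he
      rw [hFθ] at hF
      have hend := hedge θ hθ e hF
      have hcut : (g (N.ep1 e) < θ ∧ ¬ g (N.ep2 e) < θ) ∨
          (¬ g (N.ep1 e) < θ ∧ g (N.ep2 e) < θ) := by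
        simpa [uvcut] using hF
      have hne : N.ep1 e ≠ N.ep2 e := fun hcontra => by
        rw [hcontra] at hcut; tauto
      have hlipE := hedgeLip e
      simp only [hgass] at hgv
      split_ifs at hgv with hc
      · subst hgv
        exact ⟨hend.1, by simpa [UPolyNet.dvec] using hc, hinc⟩
      · subst hgv
        push_neg at hc
        have hkey : |θ - g (N.ep1 e)| + |θ - g (N.ep2 e)| ≤ c1 e + c2 e := by
          rcases hcut with ⟨hlt, hge⟩ | ⟨hge, hlt⟩
          · push_neg at hge
            rw [abs_of_nonneg (by linarith), abs_of_nonpos (by linarith)]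
            rw [abs_of_nonpos (by linarith)] at hlipE
            linarith
          · push_neg at hge
            rw [abs_of_nonpos (by linarith), abs_of_nonneg (by linarith)]
            rw [abs_of_nonneg (by linarith)] at hlipE
            linarith
        refine ⟨hend.2, ?_, hinc⟩
        simp only [UPolyNet.dvec, if_neg hne]
        linarith
    have hstep2 : (∑ v : V, N.rho v ((N.incE v ∩ Fθ).filter (fun e => gass e = v))) =
        ∑ v ∈ Finset.univ.filter (fun v => g v ∈ Set.Icc a₀ b₀),
          N.rho v ((N.incE v ∩ Fθ).filter (fun e => gass e = v)) := by
      refine (Finset.sum_subset (Finset.subset_univ _) ?_).symm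
      intro v _ hv
      have hv' : ¬ g v ∈ Set.Icc a₀ b₀ := by simpa using hv
      have hA : (N.incE v ∩ Fθ).filter (fun e => gass e = v) = ∅ := by
        rw [Finset.eq_empty_iff_forall_notMem]
        intro e he
        exact hv' (hmem v e he).1
      rw [hA, N.rho_empty]
    have hstep3 : ∀ v : V,
        N.rho v ((N.incE v ∩ Fθ).filter (fun e => gass e = v)) ≤
          hfun N c1 c2 v |θ - g v| := by
      intro v
      refine N.rho_mono v _ _ ?_ (hsubE v _)
      intro e he
      obtain ⟨-, h2', h3'⟩ := hmem v e he
      rw [Finset.mem_filter]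
      exact ⟨h3', h2'⟩
    calc N.cutCost Fθ ≤
        ∑ v : V, N.rho v ((N.incE v ∩ Fθ).filter (fun e => gass e = v)) := hstep1
      _ = ∑ v ∈ Finset.univ.filter (fun v => g v ∈ Set.Icc a₀ b₀),
          N.rho v ((N.incE v ∩ Fθ).filter (fun e => gass e = v)) := hstep2
      _ ≤ ∑ v ∈ Finset.univ.filter (fun v => g v ∈ Set.Icc a₀ b₀),
          hfun N c1 c2 v |θ - g v| := Finset.sum_le_sum fun v _ => hstep3 v
  -- sum interval integrability
  have hIIsum : IntervalIntegrable
      (fun θ => ∑ v ∈ Finset.univ.filter (fun v => g v ∈ Set.Icc a₀ b₀),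
        hfun N c1 c2 v |θ - g v|) volume a b := by
    have hs := IntervalIntegrable.sum (μ := volume) (a := a) (b := b)
      (Finset.univ.filter (fun v => g v ∈ Set.Icc a₀ b₀))
      (f := fun v θ => hfun N c1 c2 v |θ - g v|) (fun v _ => hII v)
    have heq : (∑ v ∈ Finset.univ.filter (fun v => g v ∈ Set.Icc a₀ b₀),
        fun θ => hfun N c1 c2 v |θ - g v|) =
        fun θ => ∑ v ∈ Finset.univ.filter (fun v => g v ∈ Set.Icc a₀ b₀),
          hfun N c1 c2 v |θ - g v| := by
      ext θ; simp [Finset.sum_apply]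
    rwa [heq] at hs
  by_cases hInt : IntervalIntegrable
      (fun θ => N.cutCost (uvcut N.ep1 N.ep2 (Finset.univ.filter (fun u => g u < θ))))
      volume a b
  · calc (∫ θ in a..b,
        N.cutCost (uvcut N.ep1 N.ep2 (Finset.univ.filter (fun u => g u < θ)))) ≤
        ∫ θ in a..b, ∑ v ∈ Finset.univ.filter (fun v => g v ∈ Set.Icc a₀ b₀),
          hfun N c1 c2 v |θ - g v| :=
      intervalIntegral.integral_mono_on h2.le hInt hIIsum hpt
      _ = ∑ v ∈ Finset.univ.filter (fun v => g v ∈ Set.Icc a₀ b₀),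
          ∫ θ in a..b, hfun N c1 c2 v |θ - g v| :=
        intervalIntegral.integral_finset_sum (fun v _ => hII v)
      _ ≤ ∑ v ∈ Finset.univ.filter (fun v => g v ∈ Set.Icc a₀ b₀),
          2 * N.nodeVol c1 c2 v := Finset.sum_le_sum fun v _ => hIb v
      _ = 2 * ∑ v ∈ Finset.univ.filter (fun v => g v ∈ Set.Icc a₀ b₀),
          N.nodeVol c1 c2 v := by rw [Finset.mul_sum]
  · rw [intervalIntegral.integral_undef hInt]
    have hnvnn : ∀ v : V, 0 ≤ N.nodeVol c1 c2 v := by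
      intro v
      rw [hnodeVol v]
      exact MeasureTheory.setIntegral_nonneg measurableSet_Ioi fun t _ => hnn v t
    have := Finset.sum_nonneg
      (fun v (_ : v ∈ Finset.univ.filter (fun v => g v ∈ Set.Icc a₀ b₀)) => hnvnn v)
    linarith
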